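/- Let p > 0 and 0 < r < 1 be real and let α ∈ ℂ with |α| = 1. Then the 4×4 matrix B = r·[[1/p, 0, −conj(α), 0], [0, 1/p, 0, −conj(α)], [−α, 0, p, 0], [0, −α, 0, p]] + r·[[1, −1, 0, 0], [−1, 1, 0, 0], [0, 0, 1, −1], [0, 0, −1, 1]] is Hermitian positive semidefinite of rank 3 (corank one), and its kernel is spanned by the vector (p, p, α, α)ᵀ ∈ ℂ⁴. -/

import Mathlib

open scoped ComplexOrder
open scoped Matrix

/-- The matrix `B` of the Section-7 construction. -/
noncomputable def Bmat (p r : ℝ) (α : ℂ) : Matrix (Fin 4) (Fin 4) ℂ :=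
  (r : ℂ) • !![1 / (p : ℂ), 0, -(starRingEnd ℂ) α, 0;
               0, 1 / (p : ℂ), 0, -(starRingEnd ℂ) α;
               -α, 0, (p : ℂ), 0;
               0, -α, 0, (p : ℂ)] +
  (r : ℂ) • !![1, -1, 0, 0;
               -1, 1, 0, 0;
               0, 0, 1, -1;
               0, 0, -1, 1]

noncomputable def Wmat (q s : ℝ) (α : ℂ) : Matrix (Fin 4) (Fin 4) ℂ :=
  (s : ℂ) • !![1 / (q : ℂ), 0, -(q : ℂ) * (starRingEnd ℂ) α, 0;
               0, 1 / (q : ℂ), 0, -(q : ℂ) * (starRingEnd ℂ) α;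
               1, -1, 0, 0;
               0, 0, 1, -1]

theorem factor (p r q s : ℝ) (α : ℂ) (hq : (q:ℂ)^2 = p) (hq0 : (q:ℂ) ≠ 0)
    (hs : (s:ℂ)^2 = r) (hα0 : α ≠ 0) (hconj : (starRingEnd ℂ) α = α⁻¹) :
    Bmat p r α = (Wmat q s α)ᴴ * (Wmat q s α) := by
  ext i j
  fin_cases i <;> fin_cases j <;>
    simp [Bmat, Wmat, Matrix.mul_apply, Fin.sum_univ_four, Complex.conj_ofReal,
      hconj, ← hq, ← hs, Matrix.vecHead, Matrix.vecTail]
  all_goals try ring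
  all_goals try exact (mul_inv_cancel_right₀ hq0 _).symm
  all_goals try (field_simp [hq0, hα0]; try ring)

theorem stmt17 (p r : ℝ) (hp : 0 < p) (hr0 : 0 < r) (hr1 : r < 1)
    (α : ℂ) (hα : ‖α‖ = 1) :
    (Bmat p r α).PosSemidef ∧ (Bmat p r α).rank = 3 ∧
    ∀ x : Fin 4 → ℂ,
      (Bmat p r α).mulVec x = 0 ↔ ∃ c : ℂ, x = c • ![(p : ℂ), (p : ℂ), α, α] := by
  set q := Real.sqrt p with hqdef
  set s := Real.sqrt r with hsdef
  have hq : (q:ℂ)^2 = p := by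
    rw [← Complex.ofReal_pow, Real.sq_sqrt hp.le]
  have hs : (s:ℂ)^2 = r := by
    rw [← Complex.ofReal_pow, Real.sq_sqrt hr0.le]
  have hq0 : (q:ℂ) ≠ 0 := by
    simp only [Ne, Complex.ofReal_eq_zero]
    positivity
  have hs0 : (s:ℂ) ≠ 0 := by
    simp only [Ne, Complex.ofReal_eq_zero]
    positivity
  have hα0 : α ≠ 0 := by
    intro h; rw [h] at hα; simp at hα
  have hmul : (starRingEnd ℂ) α * α = 1 := by
    rw [mul_comm, Complex.mul_conj, Complex.normSq_eq_norm_sq, hα]; norm_num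
  have hconj : (starRingEnd ℂ) α = α⁻¹ :=
    eq_inv_of_mul_eq_one_left hmul
  have hB : Bmat p r α = (Wmat q s α)ᴴ * (Wmat q s α) :=
    factor p r q s α hq hq0 hs hα0 hconj
  have hp0 : (p:ℂ) ≠ 0 := by simp only [Ne, Complex.ofReal_eq_zero]; positivity
  -- kernel characterization
  have hker : ∀ x : Fin 4 → ℂ,
      (Bmat p r α).mulVec x = 0 ↔ ∃ c : ℂ, x = c • ![(p : ℂ), (p : ℂ), α, α] := by
    intro x
    rw [hB, Matrix.conjTranspose_mul_self_mulVec_eq_zero]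
    constructor
    · intro h
      have e0 := congrFun h 0
      have e1 := congrFun h 1
      have e2 := congrFun h 2
      have e3 := congrFun h 3
      simp [Wmat, Matrix.mulVec, dotProduct, Fin.sum_univ_four] at e0 e1 e2 e3
      -- e0 : s * (x0/q - q * conj α * x2) = 0  etc
      have h0 : x 0 = (p:ℂ) * (starRingEnd ℂ) α * x 2 := by
        field_simp at e0
        apply mul_left_cancel₀ hs0
        linear_combination e0 + (s:ℂ) * (starRingEnd ℂ) α * x 2 * hq
      have h1 : x 1 = (p:ℂ) * (starRingEnd ℂ) α * x 3 := by
        field_simp at e1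
        apply mul_left_cancel₀ hs0
        linear_combination e1 + (s:ℂ) * (starRingEnd ℂ) α * x 3 * hq
      have h2 : x 0 = x 1 := by
        apply mul_left_cancel₀ hs0; linear_combination e2
      have h3 : x 2 = x 3 := by
        apply mul_left_cancel₀ hs0; linear_combination e3
      refine ⟨(starRingEnd ℂ) α * x 2, ?_⟩
      funext i
      fin_cases i
      · simp only [Pi.smul_apply, smul_eq_mul]; simp
        linear_combination h0
      · simp only [Pi.smul_apply, smul_eq_mul]; simp
        linear_combination h1 - (p:ℂ) * (starRingEnd ℂ) α * h3
      · simp only [Pi.smul_apply, smul_eq_mul]; simp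
        linear_combination -(x 2) * hmul
      · simp only [Pi.smul_apply, smul_eq_mul]; simp
        linear_combination -h3 - x 2 * hmul
    · rintro ⟨c, rfl⟩
      funext i
      fin_cases i <;>
        simp [Wmat, Matrix.mulVec, dotProduct, Fin.sum_univ_four, hconj] <;>
        field_simp <;> ring_nf <;>
        simp [← hq] <;> ring
  refine ⟨hB ▸ Matrix.posSemidef_conjTranspose_mul_self _, ?_, hker⟩
  -- rank
  have hvne : (![(p : ℂ), (p : ℂ), α, α] : Fin 4 → ℂ) ≠ 0 := by
    intro h
    have := congrFun h 0
    simp at this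
    exact hp0 (by exact_mod_cast this)
  have hkereq : LinearMap.ker (Bmat p r α).mulVecLin
      = Submodule.span ℂ {![(p : ℂ), (p : ℂ), α, α]} := by
    ext x
    rw [LinearMap.mem_ker, Matrix.mulVecLin_apply, hker x, Submodule.mem_span_singleton]
    constructor
    · rintro ⟨c, rfl⟩; exact ⟨c, rfl⟩
    · rintro ⟨c, rfl⟩; exact ⟨c, rfl⟩
  have hrn := LinearMap.finrank_range_add_finrank_ker (Bmat p r α).mulVecLin
  rw [hkereq, finrank_span_singleton hvne] at hrn
  have h4 : Module.finrank ℂ (Fin 4 → ℂ) = 4 := by simp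
  rw [h4] at hrn
  have : (Bmat p r α).rank = Module.finrank ℂ (LinearMap.range (Bmat p r α).mulVecLin) := rfl
  omega
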